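/- Suppose the additive subgroup of ℝ generated by w_1, ..., w_N is dense in ℝ (the nonlattice case). Then the complex dimensions come arbitrarily close, from the left, to the line Re s = D: for every δ > 0 there exist infinitely many complex numbers ω ≠ D with Σ_{j=1}^N e^{−w_j ω} = 1 and D − δ < Re ω < D. -/

import Mathlib

open Complex
open scoped NNReal


lemma recurrence_aux (N : ℕ) (w : Fin N → ℝ) (T ε : ℝ) (hε : 0 < ε) :
    ∃ t : ℝ, max T 1 ≤ t ∧ ∀ j, ‖Complex.exp (↑(w j * t) * Complex.I) - 1‖ < ε := by
  set T' : ℝ := max T 1 with hT'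
  have hT'1 : (1:ℝ) ≤ T' := le_max_right _ _
  have hT'0 : (0:ℝ) < T' := lt_of_lt_of_le one_pos hT'1
  set u : ℕ → (Fin N → ℂ) := fun n j => Complex.exp (↑(w j * (n * T')) * Complex.I) with hu
  have hmem : ∀ n, u n ∈ Metric.closedBall (0 : Fin N → ℂ) 1 := by
    intro n
    rw [Metric.mem_closedBall, dist_zero_right]
    refine pi_norm_le_iff_of_nonneg zero_le_one |>.2 fun j => ?_
    exact le_of_eq (by rw [show u n j = Complex.exp (↑(w j * (n * T')) * Complex.I) from rfl,
      Complex.norm_exp_ofReal_mul_I])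
  obtain ⟨x, -, φ, hφ, hconv⟩ :=
    (isCompact_closedBall (0 : Fin N → ℂ) 1).tendsto_subseq hmem
  rw [Metric.tendsto_atTop] at hconv
  obtain ⟨n₀, hn₀⟩ := hconv (ε/2) (half_pos hε)
  have hab : φ n₀ < φ (n₀ + 1) := hφ (Nat.lt_succ_self n₀)
  set a := φ n₀
  set b := φ (n₀ + 1)
  have hd : dist (u b) (u a) < ε := by
    calc dist (u b) (u a) ≤ dist (u b) x + dist (u a) x := dist_triangle_right _ _ _
    _ < ε/2 + ε/2 := add_lt_add (hn₀ (n₀+1) (Nat.le_succ _)) (hn₀ n₀ le_rfl)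
    _ = ε := add_halves ε
  refine ⟨(b - a : ℕ) * T', ?_, fun j => ?_⟩
  · calc T' = 1 * T' := (one_mul _).symm
    _ ≤ (b - a : ℕ) * T' := by
        apply mul_le_mul_of_nonneg_right _ hT'0.le
        exact_mod_cast Nat.one_le_iff_ne_zero.2 (Nat.sub_ne_zero_of_lt hab)
  · have key : Complex.exp (↑(w j * (b * T')) * Complex.I) -
        Complex.exp (↑(w j * (a * T')) * Complex.I) =
        Complex.exp (↑(w j * (a * T')) * Complex.I) *
          (Complex.exp (↑(w j * ((b - a : ℕ) * T')) * Complex.I) - 1) := by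
      rw [mul_sub, mul_one, ← Complex.exp_add]
      congr 1
      push_cast [Nat.cast_sub hab.le]
      ring
    have h2 : u b j - u a j = Complex.exp (↑(w j * (a * T')) * Complex.I) *
        (Complex.exp (↑(w j * ((b - a : ℕ) * T')) * Complex.I) - 1) := key
    have h1 : ‖Complex.exp (↑(w j * ((b-a:ℕ) * T')) * Complex.I) - 1‖
        = dist (u b j) (u a j) := by
      rw [dist_eq_norm, h2, norm_mul,
        Complex.norm_exp_ofReal_mul_I, one_mul]
    rw [h1]
    exact lt_of_le_of_lt (dist_le_pi_dist (u b) (u a) j) hd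


lemma not_dense_zmultiples (a : ℝ) (ha : a ≠ 0) :
    ¬ Dense ((AddSubgroup.zmultiples a : AddSubgroup ℝ) : Set ℝ) := by
  intro h
  have hmem := h (a / 2)
  rw [Metric.mem_closure_iff] at hmem
  obtain ⟨y, hy, hdist⟩ := hmem (|a| / 2) (by positivity)
  obtain ⟨k, rfl⟩ := AddSubgroup.mem_zmultiples_iff.1 hy
  have : dist (a/2) (k • a) = |a| * |(1:ℝ)/2 - k| := by
    rw [Real.dist_eq, zsmul_eq_mul, ← abs_mul]
    congr 1; ring
  rw [this] at hdist
  have hk : (1:ℝ)/2 ≤ |(1:ℝ)/2 - k| := by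
    rcases le_or_gt (k:ℝ) 0 with hk0 | hk0
    · rw [_root_.abs_of_nonneg (by linarith)]; linarith
    · have : (1:ℝ) ≤ k := by exact_mod_cast hk0
      rw [_root_.abs_of_nonpos (by linarith)]; linarith
  have := mul_le_mul_of_nonneg_left hk (abs_nonneg a)
  have ha' : 0 < |a| := abs_pos.2 ha
  nlinarith

lemma zero_re_lt (N : ℕ) (hN : 2 ≤ N) (w : Fin N → ℝ) (hw : ∀ j, 0 < w j)
    (D : ℝ) (hD : ∑ j, Real.exp (-(w j) * D) = 1)
    (hdense : Dense ((AddSubgroup.closure (Set.range w) : AddSubgroup ℝ) : Set ℝ))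
    (ω : ℂ) (hω : ∑ j, Complex.exp (-(w j : ℂ) * ω) = 1) (him : ω.im ≠ 0) :
    ω.re < D := by
  haveI : Nonempty (Fin N) := ⟨⟨0, by omega⟩⟩
  have hne : (Finset.univ : Finset (Fin N)).Nonempty := Finset.univ_nonempty
  have hnorm : ∀ j, ‖Complex.exp (-(w j : ℂ) * ω)‖ = Real.exp (-(w j) * ω.re) := by
    intro j
    rw [Complex.norm_exp]
    congr 1
    simp [Complex.mul_re]
  have h1 : (1:ℝ) ≤ ∑ j, Real.exp (-(w j) * ω.re) := by
    calc (1:ℝ) = ‖∑ j, Complex.exp (-(w j : ℂ) * ω)‖ := by rw [hω]; simp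
    _ ≤ ∑ j, ‖Complex.exp (-(w j : ℂ) * ω)‖ := norm_sum_le _ _
    _ = ∑ j, Real.exp (-(w j) * ω.re) := by simp_rw [hnorm]
  have hle : ω.re ≤ D := by
    by_contra hlt
    push_neg at hlt
    have : ∑ j, Real.exp (-(w j) * ω.re) < ∑ j, Real.exp (-(w j) * D) := by
      refine Finset.sum_lt_sum_of_nonempty hne fun j _ => ?_
      exact Real.exp_lt_exp.2 (by nlinarith [hw j])
    rw [hD] at this
    linarith
  refine lt_of_le_of_ne hle fun heq => ?_
  -- boundary case: ω.re = D forces lattice structure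
  set y := ω.im with hy
  have hre : ∀ j, (Complex.exp (-(w j : ℂ) * ω)).re
      = Real.exp (-(w j) * D) * Real.cos (-(w j) * y) := by
    intro j
    rw [Complex.exp_re]
    congr 2
    · simp [Complex.mul_re, heq]
    · simp [Complex.mul_im, hy]
  have hsum : ∑ j, Real.exp (-(w j) * D) * Real.cos (-(w j) * y) = 1 := by
    have h := congrArg Complex.re hω
    rw [Complex.re_sum] at h
    rw [Finset.sum_congr rfl fun j _ => hre j] at h
    simpa using h
  have hzero : ∑ j, Real.exp (-(w j) * D) * (1 - Real.cos (-(w j) * y)) = 0 := by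
    have : ∑ j, Real.exp (-(w j) * D) * (1 - Real.cos (-(w j) * y))
        = (∑ j, Real.exp (-(w j) * D)) - ∑ j, Real.exp (-(w j) * D) * Real.cos (-(w j) * y) := by
      rw [← Finset.sum_sub_distrib]
      congr 1; ext j; ring
    rw [this, hD, hsum, sub_self]
  have hcos : ∀ j, Real.cos (-(w j) * y) = 1 := by
    intro j
    have hterm := (Finset.sum_eq_zero_iff_of_nonneg (fun i _ =>
      mul_nonneg (Real.exp_pos _).le
        (sub_nonneg.2 (Real.cos_le_one _)))).1 hzero j (Finset.mem_univ j)
    have hexp : 0 < Real.exp (-(w j) * D) := Real.exp_pos _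
    have := mul_eq_zero.1 hterm
    rcases this with h | h
    · exact absurd h hexp.ne'
    · linarith
  have hsub : Set.range w ⊆ (AddSubgroup.zmultiples (2 * Real.pi / y) : AddSubgroup ℝ) := by
    rintro x ⟨j, rfl⟩
    obtain ⟨n, hn⟩ := (Real.cos_eq_one_iff _).1 (hcos j)
    refine AddSubgroup.mem_zmultiples_iff.2 ⟨-n, ?_⟩
    have : w j = -n * (2 * Real.pi) / y := by
      field_simp
      nlinarith [hn]
    rw [this, zsmul_eq_mul]
    push_cast
    field_simp
  have hled : (AddSubgroup.closure (Set.range w) : AddSubgroup ℝ)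
      ≤ AddSubgroup.zmultiples (2 * Real.pi / y) :=
    (AddSubgroup.closure_le _).2 hsub
  have : Dense ((AddSubgroup.zmultiples (2 * Real.pi / y) : AddSubgroup ℝ) : Set ℝ) :=
    hdense.mono hled
  exact not_dense_zmultiples _ (by
    have : Real.pi ≠ 0 := Real.pi_ne_zero
    positivity) this

lemma exists_zero_near (N : ℕ) (hN : 2 ≤ N) (w : Fin N → ℝ) (hw : ∀ j, 0 < w j)
    (D : ℝ) (hD : ∑ j, Real.exp (-(w j) * D) = 1)
    (δ M : ℝ) (hδ : 0 < δ) :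
    ∃ ω : ℂ, (∑ j, Complex.exp (-(w j : ℂ) * ω) = 1) ∧ D - δ < ω.re ∧ 0 < ω.im ∧ M < ω.im := by
  haveI : Nonempty (Fin N) := ⟨⟨0, by omega⟩⟩
  -- constants
  set W : ℝ := ∑ j, w j with hWdef
  have hW : ∀ j, w j ≤ W := fun j =>
    Finset.single_le_sum (fun i _ => (hw i).le) (Finset.mem_univ j)
  have hWpos : 0 < W := Finset.sum_pos (fun j _ => hw j) Finset.univ_nonempty
  set S : ℝ := ∑ j, w j * Real.exp (-(w j) * D) with hSdef
  have hSpos : 0 < S :=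
    Finset.sum_pos (fun j _ => mul_pos (hw j) (Real.exp_pos _)) Finset.univ_nonempty
  set ρ : ℝ := min (δ/2) (1/(8*(W+1))) with hρdef
  have hρpos : 0 < ρ := lt_min (by linarith) (by positivity)
  have hρδ : ρ ≤ δ/2 := min_le_left _ _
  have hWρ : W * ρ ≤ 1/8 := by
    have h1 : ρ ≤ 1/(8*(W+1)) := min_le_right _ _
    have h2 : W * ρ ≤ W * (1/(8*(W+1))) := mul_le_mul_of_nonneg_left h1 hWpos.le
    have h3 : W * (1/(8*(W+1))) ≤ 1/8 := by
      rw [mul_one_div, div_le_div_iff₀ (by positivity) (by norm_num)]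
      nlinarith
    linarith
  set ε : ℝ := min (1/8) (S*ρ/2) with hεdef
  have hεpos : 0 < ε := lt_min (by norm_num) (by positivity)
  have hε8 : ε ≤ 1/8 := min_le_left _ _
  have hεS : ε ≤ S*ρ/2 := min_le_right _ _
  -- time from recurrence
  obtain ⟨t, ht, hη⟩ := recurrence_aux N (fun j => -(w j)) (max M 0 + ρ + 1) ε hεpos
  have htM : max M 0 + ρ + 1 ≤ t := le_trans (le_max_left _ _) ht
  -- notation
  set η : Fin N → ℂ := fun j => Complex.exp (↑(-(w j) * t) * Complex.I) with hηdef
  have hηnorm : ∀ j, ‖η j‖ = 1 := fun j => by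
    rw [hηdef]; exact Complex.norm_exp_ofReal_mul_I _
  have hηε : ∀ j, ‖η j - 1‖ < ε := hη
  set E : Fin N → ℂ → ℂ := fun j s => Complex.exp (-(w j : ℂ) * (s + t * Complex.I)) with hEdef
  set G : ℂ → ℂ := fun s => (∑ j, E j s) - 1 with hGdef
  set A : ℂ := -(S : ℂ) with hAdef
  have hA : ‖A‖ = S := by
    rw [hAdef, norm_neg, Complex.norm_real, Real.norm_eq_abs, abs_of_pos hSpos]
  have hAne : A ≠ 0 := by
    rw [hAdef, neg_ne_zero]
    exact_mod_cast hSpos.ne'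
  set Φ : ℂ → ℂ := fun s => s - G s / A with hΦdef
  -- factorization
  have hfact : ∀ (j) (s : ℂ), E j s = Complex.exp (-(w j : ℂ) * s) * η j := by
    intro j s
    simp only [hEdef, hηdef]
    rw [← Complex.exp_add]
    congr 1
    push_cast
    ring
  have hfact2 : ∀ (j) (s : ℂ),
      E j s = (Real.exp (-(w j)*D) : ℂ) * (Complex.exp (-(w j : ℂ) * (s - D)) * η j) := by
    intro j s
    simp only [hEdef, hηdef, Complex.ofReal_exp]
    rw [← Complex.exp_add, ← Complex.exp_add]
    congr 1
    push_cast
    ring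
  -- term estimate on the ball
  have hterm : ∀ (j) (s : ℂ), s ∈ Metric.closedBall (D : ℂ) ρ →
      ‖E j s - (Real.exp (-(w j)*D) : ℂ)‖ ≤ Real.exp (-(w j)*D) * (2 * w j * ρ + ε) := by
    intro j s hs
    have hsD : ‖s - (D : ℂ)‖ ≤ ρ := by rwa [Metric.mem_closedBall, dist_eq_norm] at hs
    set u : ℂ := -(w j : ℂ) * (s - D) with hudef
    have hu : ‖u‖ ≤ w j * ρ := by
      rw [hudef, norm_mul, norm_neg, Complex.norm_real, Real.norm_eq_abs, abs_of_pos (hw j)]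
      exact mul_le_mul_of_nonneg_left hsD (hw j).le
    have hu1 : ‖u‖ ≤ 1 := by
      have : w j * ρ ≤ W * ρ := mul_le_mul_of_nonneg_right (hW j) hρpos.le
      linarith
    have hinner : ‖Complex.exp u * η j - 1‖ ≤ 2 * w j * ρ + ε := by
      have h1 : Complex.exp u * η j - 1 = (Complex.exp u - 1) * η j + (η j - 1) := by ring
      rw [h1]
      refine le_trans (norm_add_le _ _) ?_
      rw [norm_mul, hηnorm j, mul_one]
      have h2 : ‖Complex.exp u - 1‖ ≤ 2 * ‖u‖ := by
        have := Complex.norm_exp_sub_one_le hu1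
        exact this
      have h3 : 2 * ‖u‖ ≤ 2 * (w j * ρ) := by linarith
      have h4 := (hηε j).le
      linarith
    calc ‖E j s - (Real.exp (-(w j)*D) : ℂ)‖
        = ‖(Real.exp (-(w j)*D) : ℂ)‖ * ‖Complex.exp u * η j - 1‖ := by
          rw [← norm_mul, hfact2 j s, hudef]
          congr 1
          ring
      _ ≤ Real.exp (-(w j)*D) * (2 * w j * ρ + ε) := by
          rw [Complex.norm_real, Real.norm_eq_abs, abs_of_pos (Real.exp_pos _)]
          exact mul_le_mul_of_nonneg_left hinner (Real.exp_pos _).le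
  -- derivative of G
  have hG' : ∀ s : ℂ, HasDerivAt G (∑ j, -(w j : ℂ) * E j s) s := by
    intro s
    have hterm' : ∀ j : Fin N, HasDerivAt (fun z => E j z) (-(w j : ℂ) * E j s) s := by
      intro j
      have h1 : HasDerivAt (fun z : ℂ => -(w j : ℂ) * (z + t * Complex.I)) (-(w j : ℂ)) s := by
        simpa using ((hasDerivAt_id s).add_const ((t : ℂ) * Complex.I)).const_mul (-(w j : ℂ))
      simpa [hEdef, mul_comm] using h1.cexp
    exact (HasDerivAt.fun_sum (fun j _ => hterm' j)).sub_const 1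
  -- the complex version of hD and the cast of S
  have hDc : ∑ j, ((Real.exp (-(w j)*D) : ℝ) : ℂ) = 1 := by
    rw [← Complex.ofReal_sum]
    exact_mod_cast hD
  have hScast : (S : ℂ) = ∑ j, (w j : ℂ) * ((Real.exp (-(w j)*D) : ℝ) : ℂ) := by
    rw [hSdef]
    push_cast
    rfl
  -- derivative bound for Φ
  have hΦ' : ∀ s ∈ Metric.closedBall (D : ℂ) ρ,
      ‖1 - (∑ j, -(w j : ℂ) * E j s) / A‖ ≤ 1/2 := by
    intro s hs
    have hAG : A - ∑ j, -(w j : ℂ) * E j s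
        = ∑ j, (w j : ℂ) * (E j s - ((Real.exp (-(w j)*D) : ℝ) : ℂ)) := by
      rw [Finset.sum_congr rfl fun j _ => mul_sub ((w j : ℂ)) (E j s) _,
        Finset.sum_sub_distrib]
      simp only [hAdef, hScast, neg_mul, Finset.sum_neg_distrib]
      ring
    have hnorm1 : ‖A - ∑ j, -(w j : ℂ) * E j s‖ ≤ S / 2 := by
      rw [hAG]
      refine le_trans (norm_sum_le _ _) ?_
      have hb : ∀ j ∈ Finset.univ, ‖(w j : ℂ) * (E j s - ((Real.exp (-(w j)*D) : ℝ) : ℂ))‖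
          ≤ w j * Real.exp (-(w j)*D) * (1/2) := by
        intro j _
        rw [norm_mul, Complex.norm_real, Real.norm_eq_abs, abs_of_pos (hw j)]
        have h1 := hterm j s hs
        have h2 : 2 * w j * ρ + ε ≤ 1/2 := by
          have : w j * ρ ≤ W * ρ := mul_le_mul_of_nonneg_right (hW j) hρpos.le
          linarith
        have h3 : ‖E j s - ((Real.exp (-(w j)*D) : ℝ) : ℂ)‖ ≤ Real.exp (-(w j)*D) * (1/2) :=
          le_trans h1 (mul_le_mul_of_nonneg_left h2 (Real.exp_pos _).le)
        calc w j * ‖E j s - ((Real.exp (-(w j)*D) : ℝ) : ℂ)‖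
            ≤ w j * (Real.exp (-(w j)*D) * (1/2)) := mul_le_mul_of_nonneg_left h3 (hw j).le
          _ = w j * Real.exp (-(w j)*D) * (1/2) := by ring
      refine le_trans (Finset.sum_le_sum hb) ?_
      rw [← Finset.sum_mul, ← hSdef]
      linarith
    have heq : (1 : ℂ) - (∑ j, -(w j : ℂ) * E j s) / A
        = (A - ∑ j, -(w j : ℂ) * E j s) / A := by
      field_simp
    rw [heq, norm_div, hA]
    rw [div_le_iff₀ hSpos]
    linarith
  -- Φ is Lipschitz with constant 1/2 on the ball
  have hlip : ∀ x ∈ Metric.closedBall (D : ℂ) ρ, ∀ y ∈ Metric.closedBall (D : ℂ) ρ,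
      ‖Φ y - Φ x‖ ≤ (1/2) * ‖y - x‖ := by
    intro x hx y hy
    refine Convex.norm_image_sub_le_of_norm_hasDerivWithin_le
      (f := Φ) (f' := fun s => 1 - (∑ j, -(w j : ℂ) * E j s) / A) ?_ hΦ' (convex_closedBall _ _) hx hy
    intro s _
    exact ((hasDerivAt_id s).sub ((hG' s).div_const A)).hasDerivWithinAt
  -- Φ maps the ball into itself
  have hGD : ‖G (D : ℂ)‖ ≤ ε := by
    have h1 : ∀ j : Fin N, E j (D : ℂ) = ((Real.exp (-(w j)*D) : ℝ) : ℂ) * η j := by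
      intro j
      rw [hfact2 j (D : ℂ)]
      simp
    have hGDeq : G (D : ℂ) = ∑ j, ((Real.exp (-(w j)*D) : ℝ) : ℂ) * (η j - 1) :=
      calc G (D : ℂ) = (∑ j, ((Real.exp (-(w j)*D) : ℝ) : ℂ) * η j) - 1 := by
            simp only [hGdef]
            rw [Finset.sum_congr rfl fun j _ => h1 j]
        _ = (∑ j, ((Real.exp (-(w j)*D) : ℝ) : ℂ) * η j)
            - ∑ j, ((Real.exp (-(w j)*D) : ℝ) : ℂ) := by rw [hDc]
        _ = ∑ j, ((Real.exp (-(w j)*D) : ℝ) : ℂ) * (η j - 1) := by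
            rw [← Finset.sum_sub_distrib]
            exact Finset.sum_congr rfl fun j _ => by ring
    rw [hGDeq]
    refine le_trans (norm_sum_le _ _) ?_
    have hb : ∀ j ∈ Finset.univ, ‖((Real.exp (-(w j)*D) : ℝ) : ℂ) * (η j - 1)‖
        ≤ Real.exp (-(w j)*D) * ε := by
      intro j _
      rw [norm_mul, Complex.norm_real, Real.norm_eq_abs, abs_of_pos (Real.exp_pos _)]
      exact mul_le_mul_of_nonneg_left (hηε j).le (Real.exp_pos _).le
    refine le_trans (Finset.sum_le_sum hb) ?_
    rw [← Finset.sum_mul, hD, one_mul]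
  have hΦD : ‖Φ (D : ℂ) - (D : ℂ)‖ ≤ ε / S := by
    rw [hΦdef]
    simp only
    rw [sub_sub_cancel_left, norm_neg, norm_div, hA]
    gcongr
  have hεSρ : ε / S ≤ ρ / 2 := by
    rw [div_le_iff₀ hSpos]
    linarith
  have hmaps : Set.MapsTo Φ (Metric.closedBall (D : ℂ) ρ) (Metric.closedBall (D : ℂ) ρ) := by
    intro s hs
    rw [Metric.mem_closedBall, dist_eq_norm]
    have hsD : ‖s - (D : ℂ)‖ ≤ ρ := by rwa [Metric.mem_closedBall, dist_eq_norm] at hs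
    have h1 : ‖Φ s - Φ (D : ℂ)‖ ≤ (1/2) * ‖s - (D : ℂ)‖ :=
      hlip (D : ℂ) (Metric.mem_closedBall_self hρpos.le) s hs
    calc ‖Φ s - (D : ℂ)‖ ≤ ‖Φ s - Φ (D : ℂ)‖ + ‖Φ (D : ℂ) - (D : ℂ)‖ :=
          norm_sub_le_norm_sub_add_norm_sub _ _ _
      _ ≤ (1/2) * ρ + ρ/2 := by
          have := mul_le_mul_of_nonneg_left hsD (by norm_num : (0:ℝ) ≤ 1/2)
          linarith
      _ = ρ := by ring
  -- Banach fixed point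
  have hcl : IsComplete (Metric.closedBall (D : ℂ) ρ) :=
    Metric.isClosed_closedBall.isComplete
  have hlipOn : LipschitzOnWith (1/2 : ℝ≥0) Φ (Metric.closedBall (D : ℂ) ρ) := by
    rw [lipschitzOnWith_iff_dist_le_mul]
    intro x hx y hy
    rw [dist_eq_norm, dist_eq_norm]
    have := hlip y hy x hx
    have hco : ((1/2 : ℝ≥0) : ℝ) = 1/2 := by norm_num
    rw [hco]
    exact this
  have hcontr : ContractingWith (1/2 : ℝ≥0) (hmaps.restrict Φ _ _) :=
    ⟨by rw [← NNReal.coe_lt_coe]; push_cast; norm_num, hlipOn.mapsToRestrict hmaps⟩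
  obtain ⟨y, hyball, hyfix, -, -⟩ := ContractingWith.exists_fixedPoint' hcl hmaps hcontr
    (Metric.mem_closedBall_self hρpos.le) (edist_ne_top _ _)
  have hGy : G y = 0 := by
    have h := hyfix
    rw [Function.IsFixedPt, hΦdef] at h
    simp only at h
    have h2 : G y / A = 0 := sub_eq_self.1 h
    rcases div_eq_zero_iff.1 h2 with h3 | h3
    · exact h3
    · exact absurd h3 hAne
  simp only [hGdef] at hGy
  have hsum : ∑ j, E j y = 1 := sub_eq_zero.1 hGy
  have hyD : ‖y - (D : ℂ)‖ ≤ ρ := by rwa [Metric.mem_closedBall, dist_eq_norm] at hyball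
  have h1 : |(y - (D : ℂ)).re| ≤ ρ :=
    le_trans (Complex.abs_re_le_norm _) hyD
  have h2 : |(y - (D : ℂ)).im| ≤ ρ :=
    le_trans (Complex.abs_im_le_norm _) hyD
  have hre : |y.re - D| ≤ ρ := by simpa using h1
  have himy : |y.im| ≤ ρ := by simpa using h2
  have hrel := abs_le.1 hre
  have himyl := abs_le.1 himy
  have hM0 : M ≤ max M 0 := le_max_left _ _
  have h00 : (0:ℝ) ≤ max M 0 := le_max_right _ _
  refine ⟨y + (t : ℂ) * Complex.I, ?_, ?_, ?_, ?_⟩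
  · have : ∀ j, Complex.exp (-(w j : ℂ) * (y + (t : ℂ) * Complex.I)) = E j y := fun j => rfl
    rw [Finset.sum_congr rfl fun j _ => this j]
    exact hsum
  · have hre2 : (y + (t : ℂ) * Complex.I).re = y.re := by simp
    rw [hre2]
    linarith
  · have him2 : (y + (t : ℂ) * Complex.I).im = y.im + t := by simp
    rw [him2]
    linarith
  · have him2 : (y + (t : ℂ) * Complex.I).im = y.im + t := by simp
    rw [him2]
    linarith


/-- Nonlattice case: the complex dimensions come arbitrarily close, from the left, to
the line `Re s = D`: for every `δ > 0` there are infinitely many complex dimensions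
`ω ≠ D` with `D - δ < Re ω < D`. -/
theorem nonlattice_dimensions_approach_line (N : ℕ) (hN : 2 ≤ N) (w : Fin N → ℝ)
    (hw : ∀ j, 0 < w j) (hmono : Monotone w)
    (D : ℝ) (hD : ∑ j, Real.exp (-(w j) * D) = 1)
    (hdense : Dense ((AddSubgroup.closure (Set.range w) : AddSubgroup ℝ) : Set ℝ)) :
    ∀ δ : ℝ, 0 < δ →
      {ω : ℂ | ω ≠ (D : ℂ) ∧ ∑ j, Complex.exp (-(w j : ℂ) * ω) = 1 ∧
        D - δ < ω.re ∧ ω.re < D}.Infinite := by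
  intro δ hδ
  by_contra hfin
  rw [Set.not_infinite] at hfin
  obtain ⟨M, hM⟩ := (hfin.image Complex.im).bddAbove
  obtain ⟨ω, hsum, hre, him0, himM⟩ := exists_zero_near N hN w hw D hD δ M hδ
  have hlt : ω.re < D := zero_re_lt N hN w hw D hD hdense ω hsum him0.ne'
  have hneD : ω ≠ (D : ℂ) := by
    intro h
    rw [h] at him0
    simp at him0
  have hmem : ω ∈ {ω : ℂ | ω ≠ (D : ℂ) ∧ ∑ j, Complex.exp (-(w j : ℂ) * ω) = 1 ∧
      D - δ < ω.re ∧ ω.re < D} := ⟨hneD, hsum, hre, hlt⟩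
  have : ω.im ≤ M := hM (Set.mem_image_of_mem _ hmem)
  linarith
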